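/- Let H be a real Hilbert space with dim H ≥ 2 and let m ≥ 3 be an integer. There exists no function Φ : H^m → ℝ such that for every ordered family (C_1,…,C_m) of nonempty closed convex subsets of H, the set of cycles cyc(C_1,…,C_m) equals the set of minimizers of Φ over C_1 × ⋯ × C_m. -/

import Mathlib

/-- `p` is the metric projection of `x` onto `C`. -/
def IsProj {E : Type*} [NormedAddCommGroup E] (C : Set E) (x p : E) : Prop :=
  p ∈ C ∧ ∀ y ∈ C, ‖x - p‖ ≤ ‖x - y‖

/-- `y` is a cycle of the ordered family of sets `C`:
`y i` is the projection of `y (i+1)` onto `C i` (indices mod `m`). -/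
def IsCycle {E : Type*} [NormedAddCommGroup E] {m : ℕ} [NeZero m]
    (C : Fin m → Set E) (y : Fin m → E) : Prop :=
  ∀ i : Fin m, IsProj (C i) (y (i + 1)) (y i)

theorem no_variational_characterization_of_cycles
    {H : Type*} [NormedAddCommGroup H] [InnerProductSpace ℝ H] [CompleteSpace H]
    (hdim : 2 ≤ Module.rank ℝ H) (m : ℕ) [NeZero m] (hm : 3 ≤ m) :
    ¬ ∃ Φ : (Fin m → H) → ℝ,
        ∀ C : Fin m → Set H,
          (∀ i, (C i).Nonempty ∧ IsClosed (C i) ∧ Convex ℝ (C i)) →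
          {y : Fin m → H | IsCycle C y} =
            {y : Fin m → H | (∀ i, y i ∈ C i) ∧
              ∀ z : Fin m → H, (∀ i, z i ∈ C i) → Φ y ≤ Φ z} := by
  rintro ⟨Φ, hΦ⟩
  -- Basic `Fin m` arithmetic facts.
  have hm1 : m ≠ 1 := by omega
  have hone : (1 : Fin m) ≠ 0 := fun h => hm1 (Fin.one_eq_zero_iff.mp h)
  have hadd1 : ∀ j : Fin m, j + 1 ≠ j := by
    intro j h
    exact hone (by have := congrArg (fun t => t - j) h; simpa [add_sub_cancel_right] using this)
  have hsub1 : ∀ j : Fin m, j - 1 ≠ j := by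
    intro j h
    exact hone (by have := congrArg (fun t => j - t) h; simpa [sub_sub_cancel] using this)
  open Fin.NatCast Fin.CommRing in
  have htwo : (2 : Fin m) ≠ 0 := by
    intro h
    have h2 : ((2 : ℕ) : Fin m) = 0 := by
      have h' : ((2 : ℕ) : Fin m) = (2 : Fin m) := by norm_cast
      rw [h', h]
    have hdvd := (Fin.natCast_eq_zero).mp h2
    exact absurd (Nat.le_of_dvd (by norm_num) hdvd) (by omega)
  open Fin.NatCast Fin.CommRing in
  have hadd2 : ∀ j : Fin m, j + 1 ≠ j - 1 := by
    intro j h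
    apply htwo
    calc (2 : Fin m) = (j + 1) - j + 1 := by ring
      _ = (j - 1) - j + 1 := by rw [h]
      _ = 0 := by ring
  -- segments are closed
  have hsegcl : ∀ x y : H, IsClosed (segment ℝ x y) := by
    intro x y
    rw [segment_eq_image ℝ x y]
    exact ((isCompact_Icc).image (by fun_prop)).isClosed
  -- Key lemma: copying coordinate k+1 into coordinate k strictly decreases Φ.
  have copy : ∀ (a : Fin m → H) (k : Fin m), a k ≠ a (k + 1) →
      Φ (Function.update a k (a (k + 1))) < Φ a := by
    intro a k hk
    set u := a (k + 1) with hu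
    set C : Fin m → Set H := fun i => if i = k then segment ℝ u (a k) else {a i} with hC
    have hcond : ∀ i, (C i).Nonempty ∧ IsClosed (C i) ∧ Convex ℝ (C i) := by
      intro i
      by_cases h : i = k
      · refine ⟨⟨u, ?_⟩, ?_, ?_⟩ <;> simp only [hC, h, if_pos rfl]
        · exact left_mem_segment ℝ u (a k)
        · exact hsegcl u (a k)
        · exact convex_segment u (a k)
      · refine ⟨⟨a i, ?_⟩, ?_, ?_⟩ <;> simp only [hC, if_neg h]
        · exact rfl
        · exact isClosed_singleton
        · exact convex_singleton (a i)
    have hset := hΦ C hcond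
    set y : Fin m → H := Function.update a k u with hy
    have hyk1 : y (k + 1) = u := Function.update_of_ne (hadd1 k) u a
    have hycyc : IsCycle C y := by
      intro i
      by_cases h : i = k
      · rw [h]
        constructor
        · simp only [hC, if_pos rfl, hy, Function.update_self]
          exact left_mem_segment ℝ u (a k)
        · intro w hw
          rw [hyk1, hy, Function.update_self]
          simp [norm_nonneg]
      · constructor
        · simp only [hC, if_neg h, hy, Function.update_of_ne h]
          exact rfl
        · intro w hw
          simp only [hC, if_neg h, Set.mem_singleton_iff] at hw
          subst hw
          rw [hy, Function.update_of_ne h]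
    have hamem : ∀ i, a i ∈ C i := by
      intro i
      by_cases h : i = k
      · rw [h]
        simp only [hC, if_pos rfl]
        exact right_mem_segment ℝ u (a k)
      · simp only [hC, if_neg h]
        exact rfl
    have hacyc : ¬ IsCycle C a := by
      intro hcyc
      have h2 := (hcyc k).2 u (by simp only [hC, if_pos rfl]; exact left_mem_segment ℝ u (a k))
      rw [← hu] at h2
      simp only [sub_self, norm_zero] at h2
      have h3 : ‖u - a k‖ = 0 := le_antisymm h2 (norm_nonneg _)
      exact hk (sub_eq_zero.mp (norm_eq_zero.mp h3)).symm
    have hymem : (∀ i, y i ∈ C i) ∧ ∀ z : Fin m → H, (∀ i, z i ∈ C i) → Φ y ≤ Φ z := by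
      have : y ∈ {y : Fin m → H | (∀ i, y i ∈ C i) ∧
          ∀ z : Fin m → H, (∀ i, z i ∈ C i) → Φ y ≤ Φ z} := by
        rw [← hset]; exact hycyc
      exact this
    have hanot : a ∉ {y : Fin m → H | (∀ i, y i ∈ C i) ∧
        ∀ z : Fin m → H, (∀ i, z i ∈ C i) → Φ y ≤ Φ z} := by
      rw [← hset]; exact hacyc
    simp only [Set.mem_setOf_eq, not_and, not_forall, not_le] at hanot
    obtain ⟨z, hz, hza⟩ := hanot hamem
    exact lt_of_le_of_lt (hymem.2 z hz) hza
  -- A nonzero vector.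
  obtain ⟨x, hx⟩ : ∃ x : H, x ≠ 0 := by
    by_contra h
    push_neg at h
    have : Subsingleton H := ⟨fun a b => by rw [h a, h b]⟩
    rw [rank_subsingleton'] at hdim
    exact absurd hdim (by norm_num)
  -- The configuration with a single `x` at position `j` and `0` elsewhere.
  set P : Fin m → (Fin m → H) := fun j i => if i = j then x else 0 with hP
  -- Moving the `x` one step back strictly decreases Φ.
  have step : ∀ j : Fin m, Φ (P (j - 1)) < Φ (P j) := by
    intro j
    set Q : Fin m → H := Function.update (P j) (j - 1) x with hQ
    have h1 : Φ Q < Φ (P j) := by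
      have hval : P j (j - 1 + 1) = x := by
        simp only [hP, sub_add_cancel, if_pos rfl]
      have hne : P j (j - 1) ≠ P j (j - 1 + 1) := by
        rw [hval]
        simp only [hP, if_neg (hsub1 j)]
        exact fun h => hx h.symm
      have := copy (P j) (j - 1) hne
      rwa [hval] at this
    have h2 : Φ (P (j - 1)) < Φ Q := by
      have hQj : Q j = x := by
        rw [hQ, Function.update_of_ne (Ne.symm (hsub1 j))]
        simp only [hP, if_pos rfl]
      have hQj1 : Q (j + 1) = 0 := by
        rw [hQ, Function.update_of_ne (hadd2 j)]
        simp only [hP, if_neg (hadd1 j)]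
      have hne : Q j ≠ Q (j + 1) := by rw [hQj, hQj1]; exact hx
      have := copy Q j hne
      have heq : Function.update Q j (Q (j + 1)) = P (j - 1) := by
        funext i
        by_cases h : i = j
        · rw [h, Function.update_self, hQj1]
          simp [hP, Ne.symm (hsub1 j)]
        · rw [Function.update_of_ne h, hQ]
          by_cases h' : i = j - 1
          · subst h'
            rw [Function.update_self]
            simp only [hP, if_pos rfl]
          · rw [Function.update_of_ne h']
            simp only [hP, if_neg h, if_neg h']
      rwa [heq] at this
    exact h2.trans h1
  -- Iterate around the cycle to get a contradiction.
  have iter : ∀ n : ℕ, Φ (P (0 - (n + 1 : ℕ))) < Φ (P 0) := by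
    intro n
    induction n with
    | zero =>
        have := step 0
        simpa using this
    | succ n ih =>
        have hs := step (0 - ((n + 1 : ℕ) : Fin m))
        have harith : (0 : Fin m) - ((n + 1 : ℕ) : Fin m) - 1 = 0 - ((n + 1 + 1 : ℕ) : Fin m) := by
          push_cast
          ring
        rw [harith] at hs
        exact hs.trans ih
  have hfin := iter (m - 1)
  have hmm : ((m - 1 : ℕ) + 1 : ℕ) = m := by omega
  rw [hmm] at hfin
  rw [Fin.natCast_self, sub_zero] at hfin
  exact lt_irrefl _ hfin
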